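/- arXiv:2101.10615 — 3 statements merged into one kernel-verified Lean document; each statement's English description precedes it below -/
import Mathlib

section
/- Let f be a real analytic function on [0,T] that is not identically zero, with distinct zeros t_1,...,t_m in [0,T] of orders d_1,...,d_m respectively, and let β = max_j d_j. Then there exists a constant C > 0 such that |f(t)| ≥ C · min_{1≤j≤m} |t - t_j|^β for all t ∈ [0,T]. -/
open Set MeasureTheory Filter Topology

private lemma my_analyticAt_deriv {u : ℝ → ℝ} {x : ℝ} (hu : AnalyticAt ℝ u x) :
    AnalyticAt ℝ (deriv u) x := by
  obtain ⟨s, hs, hos⟩ := hu.exists_mem_nhds_analyticOnNhd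
  exact hos.deriv x (mem_of_mem_nhds hs)

private lemma my_analyticAt_iteratedDeriv {u : ℝ → ℝ} {x : ℝ} (hu : AnalyticAt ℝ u x) (k : ℕ) :
    AnalyticAt ℝ (iteratedDeriv k u) x := by
  induction k with
  | zero => simpa [iteratedDeriv_zero] using hu
  | succ k ih => rw [iteratedDeriv_succ]; exact my_analyticAt_deriv ih

private lemma my_vanish (x : ℝ) : ∀ (n : ℕ) (g u : ℝ → ℝ), AnalyticAt ℝ u x →
    (∀ᶠ z in 𝓝 x, g z = (z - x) ^ n * u z) → ∀ k < n, iteratedDeriv k g x = 0 := by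
  intro n
  induction n with
  | zero => intro g u _ _ k hk; omega
  | succ n IH =>
    intro g u hu hfac k hk
    match k with
    | 0 =>
      have := hfac.self_of_nhds
      simp only [iteratedDeriv_zero, this, sub_self]
      simp
    | (k + 1) =>
      rw [iteratedDeriv_succ']
      have hderivu : AnalyticAt ℝ (deriv u) x := my_analyticAt_deriv hu
      have hsub : AnalyticAt ℝ (fun z : ℝ => z - x) x :=
        AnalyticAt.sub analyticAt_id analyticAt_const
      have hu' : AnalyticAt ℝ (fun z => ((n : ℝ) + 1) * u z + (z - x) * deriv u z) x :=
        (analyticAt_const.mul hu).add (hsub.mul hderivu)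
      have hfac' : ∀ᶠ z in 𝓝 x,
          deriv g z = (z - x) ^ n * (((n : ℝ) + 1) * u z + (z - x) * deriv u z) := by
        have hfacEq : g =ᶠ[𝓝 x] (fun z => (z - x) ^ (n + 1) * u z) := hfac
        filter_upwards [hu.eventually_analyticAt, hfacEq.eventuallyEq_nhds] with z hz hgz
        rw [hgz.deriv_eq]
        have hd1 : HasDerivAt (fun w : ℝ => (w - x) ^ (n + 1))
            ((((n : ℝ) + 1) * (z - x) ^ n) * 1) z := by
          have := ((hasDerivAt_id z).sub_const x).fun_pow (n + 1)
          simpa using this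
        have hd2 : HasDerivAt u (deriv u z) z := hz.differentiableAt.hasDerivAt
        rw [(hd1.fun_mul hd2).deriv]
        ring
      exact IH (deriv g) _ hu' hfac' k (by omega)

private lemma my_local_bound (T : ℝ) (hT : 0 < T) (f : ℝ → ℝ)
    (hf : AnalyticOn ℝ f (Set.Icc 0 T))
    {m : ℕ} (t : Fin m → ℝ)
    (ht : ∀ j, t j ∈ Set.Icc 0 T)
    (hzeros : ∀ s ∈ Set.Icc 0 T, f s = 0 ↔ ∃ j, s = t j)
    (β : ℕ) (j : Fin m) (dj : ℕ) (hd1 : 1 ≤ dj) (hdj : dj ≤ β)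
    (horder1 : ∀ k < dj, iteratedDeriv k f (t j) = 0)
    (horder2 : iteratedDeriv dj f (t j) ≠ 0) :
    ∃ ε > 0, ∃ c > 0, ∀ s ∈ Set.Icc 0 T, |s - t j| < ε → c * |s - t j| ^ β ≤ |f s| := by
  set x := t j with hxdef
  have hx : x ∈ Icc 0 T := ht j
  obtain ⟨g, hgx, hEqOn, hg⟩ := (hf x hx).exists_analyticAt
  have hEq : EqOn f g (Icc 0 T) := fun z hz => hEqOn (Set.mem_insert_of_mem _ hz)
  have hint : ∀ z ∈ Ioo (0:ℝ) T, ∀ k, iteratedDeriv k f z = iteratedDeriv k g z := by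
    intro z hz k
    have hfg : f =ᶠ[𝓝 z] g :=
      eventually_of_mem (isOpen_Ioo.mem_nhds hz) (fun w hw => hEq (Ioo_subset_Icc_self hw))
    exact hfg.iteratedDeriv_eq k
  -- a one-sided filter at x staying in Ioo 0 T
  obtain ⟨l, hlne, hlle, hlmem⟩ : ∃ l : Filter ℝ, l.NeBot ∧ l ≤ 𝓝[≠] x ∧
      ∀ᶠ z in l, z ∈ Ioo (0:ℝ) T := by
    rcases lt_or_eq_of_le hx.2 with hxT | hxT
    · refine ⟨𝓝[>] x, inferInstance, nhdsWithin_mono x ?_, ?_⟩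
      · intro z hz; exact ne_of_gt hz
      · exact eventually_of_mem (Ioo_mem_nhdsGT_of_mem ⟨le_refl x, hxT⟩)
          (fun z hz => ⟨lt_of_le_of_lt hx.1 hz.1, hz.2⟩)
    · refine ⟨𝓝[<] x, inferInstance, nhdsWithin_mono x ?_, ?_⟩
      · intro z hz; exact ne_of_lt hz
      · have h0x : (0:ℝ) < x := hxT ▸ hT
        exact eventually_of_mem (Ioo_mem_nhdsLT_of_mem ⟨h0x, le_refl x⟩)
          (fun z hz => ⟨hz.1, lt_of_lt_of_le hz.2 hx.2⟩)
  -- order is finite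
  have hne_top : analyticOrderAt g x ≠ ⊤ := by
    intro htop
    rw [analyticOrderAt_eq_top] at htop
    obtain ⟨r, hr, hzero⟩ := Metric.eventually_nhds_iff.mp htop
    -- find a point of Icc 0 T in the ball that is not a zero of f
    obtain ⟨s, hsI, hsIcc, hsdist⟩ : ∃ s, s ∉ Set.range t ∧ s ∈ Icc (0:ℝ) T ∧ dist s x < r := by
      rcases lt_or_eq_of_le hx.2 with hxT | hxT
      · have hxb : x < min T (x + r) := lt_min hxT (by linarith)
        obtain ⟨s, hsI, hsnot⟩ := ((Set.Ioo_infinite hxb).diff (Set.finite_range t)).nonempty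
        refine ⟨s, hsnot, ⟨le_of_lt (lt_of_le_of_lt hx.1 hsI.1), le_of_lt
          (lt_of_lt_of_le hsI.2 (min_le_left _ _))⟩, ?_⟩
        rw [Real.dist_eq, abs_of_pos (by linarith [hsI.1])]
        have := lt_of_lt_of_le hsI.2 (min_le_right _ _)
        linarith
      · have h0x : (0:ℝ) < x := hxT ▸ hT
        have hax : max 0 (x - r) < x := max_lt h0x (by linarith)
        obtain ⟨s, hsI, hsnot⟩ := ((Set.Ioo_infinite hax).diff (Set.finite_range t)).nonempty
        refine ⟨s, hsnot, ⟨le_of_lt (lt_of_le_of_lt (le_max_left _ _) hsI.1),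
          le_trans (le_of_lt hsI.2) hx.2⟩, ?_⟩
        rw [Real.dist_eq, abs_of_neg (by linarith [hsI.2])]
        have := lt_of_le_of_lt (le_max_right 0 (x - r)) hsI.1
        linarith
    have hfs : f s = 0 := by rw [hEq hsIcc]; exact hzero hsdist
    obtain ⟨j', hj'⟩ := (hzeros s hsIcc).mp hfs
    exact hsI ⟨j', hj'.symm⟩
  obtain ⟨n, hn⟩ : ∃ n : ℕ, analyticOrderAt g x = (n : ℕ∞) := ⟨(analyticOrderAt g x).toNat, (ENat.coe_toNat hne_top).symm⟩
  obtain ⟨u, hu, hux, hfac⟩ := (hg.analyticOrderAt_eq_natCast (n := n)).mp hn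
  have hfac' : ∀ᶠ z in 𝓝 x, g z = (z - x) ^ n * u z := by
    simpa only [smul_eq_mul] using hfac
  -- n ≤ dj
  have hnle : n ≤ dj := by
    by_contra hlt
    push_neg at hlt
    have hvan : ∀ k < n, iteratedDeriv k g x = 0 := my_vanish x n g u hu hfac'
    have hd0 : dj - 1 + 1 = dj := Nat.succ_pred_eq_of_pos hd1
    set h := iteratedDeriv (dj - 1) f with hhdef
    have hdiff : DifferentiableAt ℝ h x := by
      by_contra hnd
      apply horder2
      rw [← hd0, iteratedDeriv_succ]
      exact deriv_zero_of_not_differentiableAt hnd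
    have hL : Tendsto (slope h x) (𝓝[≠] x) (𝓝 (deriv h x)) :=
      hasDerivAt_iff_tendsto_slope.mp hdiff.hasDerivAt
    set G := iteratedDeriv (dj - 1) g with hGdef
    have hGanal : AnalyticAt ℝ G x := my_analyticAt_iteratedDeriv hg (dj - 1)
    have hGx : G x = 0 := hvan (dj - 1) (by omega)
    have hG' : deriv G x = 0 := by
      have h1 : iteratedDeriv (dj - 1 + 1) g x = 0 := by rw [hd0]; exact hvan dj hlt
      rw [iteratedDeriv_succ] at h1
      exact h1
    have hGt : Tendsto (slope G x) (𝓝[≠] x) (𝓝 0) := by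
      have := hasDerivAt_iff_tendsto_slope.mp hGanal.differentiableAt.hasDerivAt
      rwa [hG'] at this
    have heqsl : slope h x =ᶠ[l] slope G x := by
      filter_upwards [hlmem] with z hz
      have hhx : h x = 0 := horder1 (dj - 1) (by omega)
      simp only [slope_def_field]
      rw [hhdef, hGdef, hint z hz (dj - 1)]
      rw [show iteratedDeriv (dj-1) f x = 0 from hhx, show iteratedDeriv (dj-1) g x = 0 from hGx]
    have h1 : Tendsto (slope h x) l (𝓝 (deriv h x)) := hL.mono_left hlle
    have h2 : Tendsto (slope h x) l (𝓝 0) := (hGt.mono_left hlle).congr' heqsl.symm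
    have : deriv h x = 0 := tendsto_nhds_unique h1 h2
    apply horder2
    rw [← hd0, iteratedDeriv_succ]
    exact this
  -- lower bound near x
  have hev : ∀ᶠ z in 𝓝 x, |u x| / 2 ≤ |u z| := by
    have hc : Tendsto u (𝓝 x) (𝓝 (u x)) := hu.continuousAt
    have := (Metric.tendsto_nhds.mp hc) (|u x| / 2) (by positivity)
    filter_upwards [this] with z hz
    rw [Real.dist_eq] at hz
    have h1 : |u x| - |u z| ≤ |u z - u x| := by
      have := abs_sub_abs_le_abs_sub (u x) (u z)
      rw [abs_sub_comm] at this
      linarith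
    linarith
  obtain ⟨ε₁, hε₁, hball⟩ := Metric.eventually_nhds_iff.mp (hfac'.and hev)
  refine ⟨min ε₁ 1, by positivity, |u x| / 2, by positivity, ?_⟩
  intro s hs hsx
  have hd : dist s x < ε₁ := by
    rw [Real.dist_eq]; exact lt_of_lt_of_le hsx (min_le_left _ _)
  obtain ⟨hfs, hus⟩ := hball hd
  have hfg : f s = g s := hEq hs
  calc |u x| / 2 * |s - x| ^ β ≤ |u x| / 2 * |s - x| ^ n := by
        apply mul_le_mul_of_nonneg_left _ (by positivity)
        exact pow_le_pow_of_le_one (abs_nonneg _)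
          (le_of_lt (lt_of_lt_of_le hsx (min_le_right _ _))) (le_trans hnle hdj)
    _ ≤ |u s| * |s - x| ^ n := by
        apply mul_le_mul_of_nonneg_right hus (by positivity)
    _ = |g s| := by rw [hfs, abs_mul, abs_pow]; ring
    _ = |f s| := by rw [hfg]
/-- If `f` is real analytic on `[0,T]`, not identically zero, with distinct zeros
`t 1, ..., t m` of orders `d 1, ..., d m`, and `β = max d j`, then there is `C > 0`
with `|f t| ≥ C * min_j |t - t j| ^ β` on `[0,T]`. -/
theorem stmt_0 (T : ℝ) (hT : 0 < T) (f : ℝ → ℝ)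
    (hf : AnalyticOn ℝ f (Set.Icc 0 T))
    (m : ℕ) (hm : 0 < m) (t : Fin m → ℝ) (d : Fin m → ℕ)
    (ht : ∀ j, t j ∈ Set.Icc 0 T)
    (htinj : Function.Injective t)
    (hd : ∀ j, 1 ≤ d j)
    (hzeros : ∀ s ∈ Set.Icc 0 T, f s = 0 ↔ ∃ j, s = t j)
    (horder : ∀ j, (∀ k < d j, iteratedDeriv k f (t j) = 0) ∧
      iteratedDeriv (d j) f (t j) ≠ 0)
    (β : ℕ) (hβ : β = Finset.univ.sup d) :
    ∃ C > 0, ∀ s ∈ Set.Icc 0 T,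
      C * (Finset.univ.inf' (@Finset.univ_nonempty (Fin m) _ (Fin.pos_iff_nonempty.mp hm)) fun j => |s - t j| ^ β)
        ≤ |f s| := by
  have hloc : ∀ j : Fin m, ∃ ε > 0, ∃ c > 0, ∀ s ∈ Set.Icc 0 T, |s - t j| < ε →
      c * |s - t j| ^ β ≤ |f s| := fun j =>
    my_local_bound T hT f hf t ht hzeros β j (d j) (hd j)
      (hβ ▸ Finset.le_sup (Finset.mem_univ j)) (horder j).1 (horder j).2
  choose ε hε c hc hlocb using hloc
  have hne : (Finset.univ : Finset (Fin m)).Nonempty :=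
    @Finset.univ_nonempty (Fin m) _ (Fin.pos_iff_nonempty.mp hm)
  set K := Icc (0:ℝ) T \ ⋃ i, Metric.ball (t i) (ε i) with hKdef
  have hKcomp : IsCompact K := isCompact_Icc.diff (isOpen_iUnion fun i => Metric.isOpen_ball)
  obtain ⟨c₀, hc₀, hc₀K⟩ : ∃ c₀ > 0, ∀ z ∈ K, c₀ ≤ |f z| := by
    rcases K.eq_empty_or_nonempty with hKe | hKne
    · exact ⟨1, one_pos, by simp [hKe]⟩
    · obtain ⟨z₀, hz₀K, hz₀min⟩ := hKcomp.exists_isMinOn hKne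
        ((hf.continuousOn.mono diff_subset).abs)
      have hfz₀ : f z₀ ≠ 0 := by
        intro h0
        obtain ⟨i, hi⟩ := (hzeros z₀ hz₀K.1).mp h0
        exact hz₀K.2 (Set.mem_iUnion.mpr ⟨i, hi ▸ Metric.mem_ball_self (hε i)⟩)
      exact ⟨|f z₀|, abs_pos.mpr hfz₀, fun z hz => hz₀min hz⟩
  have hCc : 0 < Finset.univ.inf' hne c := by
    rw [Finset.lt_inf'_iff]; intro i _; exact hc i
  have hTβ : (0:ℝ) < T ^ β := by positivity
  refine ⟨min (Finset.univ.inf' hne c) (c₀ / T ^ β), lt_min hCc (by positivity), ?_⟩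
  intro s hs
  have hG0 : 0 ≤ Finset.univ.inf'
      (@Finset.univ_nonempty (Fin m) _ (Fin.pos_iff_nonempty.mp hm)) fun j => |s - t j| ^ β :=
    Finset.le_inf' _ _ (fun i _ => by positivity)
  by_cases hmem : ∃ i, s ∈ Metric.ball (t i) (ε i)
  · obtain ⟨i, hi⟩ := hmem
    have h1 : |s - t i| < ε i := by rwa [Metric.mem_ball, Real.dist_eq] at hi
    have h2 := hlocb i s hs h1
    calc min (Finset.univ.inf' hne c) (c₀ / T ^ β) *
          (Finset.univ.inf' (@Finset.univ_nonempty (Fin m) _ (Fin.pos_iff_nonempty.mp hm))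
            fun j => |s - t j| ^ β)
        ≤ Finset.univ.inf' hne c *
          (Finset.univ.inf' (@Finset.univ_nonempty (Fin m) _ (Fin.pos_iff_nonempty.mp hm))
            fun j => |s - t j| ^ β) :=
          mul_le_mul_of_nonneg_right (min_le_left _ _) hG0
      _ ≤ Finset.univ.inf' hne c * |s - t i| ^ β :=
          mul_le_mul_of_nonneg_left (Finset.inf'_le _ (Finset.mem_univ i)) hCc.le
      _ ≤ c i * |s - t i| ^ β :=
          mul_le_mul_of_nonneg_right (Finset.inf'_le _ (Finset.mem_univ i)) (by positivity)
      _ ≤ |f s| := h2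
  · have hsK : s ∈ K := ⟨hs, fun h => hmem (Set.mem_iUnion.mp h)⟩
    have i0 : Fin m := ⟨0, hm⟩
    have habs : |s - t i0| ≤ T := by
      rw [abs_sub_le_iff]
      constructor
      · linarith [hs.2, (ht i0).1]
      · linarith [hs.1, (ht i0).2]
    have hGle : (Finset.univ.inf' (@Finset.univ_nonempty (Fin m) _ (Fin.pos_iff_nonempty.mp hm))
        fun j => |s - t j| ^ β) ≤ T ^ β :=
      le_trans (Finset.inf'_le _ (Finset.mem_univ i0)) (pow_le_pow_left₀ (abs_nonneg _) habs β)
    calc min (Finset.univ.inf' hne c) (c₀ / T ^ β) *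
          (Finset.univ.inf' (@Finset.univ_nonempty (Fin m) _ (Fin.pos_iff_nonempty.mp hm))
            fun j => |s - t j| ^ β)
        ≤ (c₀ / T ^ β) *
          (Finset.univ.inf' (@Finset.univ_nonempty (Fin m) _ (Fin.pos_iff_nonempty.mp hm))
            fun j => |s - t j| ^ β) :=
          mul_le_mul_of_nonneg_right (min_le_right _ _) hG0
      _ ≤ (c₀ / T ^ β) * T ^ β := mul_le_mul_of_nonneg_left hGle (by positivity)
      _ = c₀ := div_mul_cancel₀ _ (ne_of_gt hTβ)
      _ ≤ |f s| := hc₀K s hsK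
end

section
/- Let f be a real analytic function on [0,T] that is not identically zero, and let Q ⊂ ℝ⁺ × Ω be a measurable set, with Ω ⊂ ℝⁿ a bounded domain. Then there exist constants C > 0 and β > 0 such that for every S ∈ [0,T), for almost every x ∈ Ω, ∫_S^T χ_Q(t,x) |f(t)| dt ≥ C (∫_S^T χ_Q(t,x) dt)^{β+1}. -/
open Set MeasureTheory Real Bornology

open Metric Filter in
-- f is not identically zero near any interior point
lemma aux_not_ev_zero (T : ℝ) (hT : 0 < T) (f : ℝ → ℝ) (hf : AnalyticOn ℝ f (Icc 0 T))
    (hfne : ∃ s ∈ Icc 0 T, f s ≠ 0) (w : ℝ) (hw : w ∈ Ioo 0 T) :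
    ¬ ∀ᶠ t in nhds w, f t = 0 := by
  intro hev
  have hnhd : AnalyticOnNhd ℝ f (Ioo 0 T) := by
    intro x hx
    have := (hf x (Ioo_subset_Icc_self hx)).mono_of_mem_nhdsWithin
      (by rw [nhdsWithin_univ]; exact Icc_mem_nhds hx.1 hx.2)
    exact analyticWithinAt_univ.mp this
  have hIoo : EqOn f 0 (Ioo 0 T) :=
    hnhd.eqOn_zero_of_preconnected_of_eventuallyEq_zero isPreconnected_Ioo hw hev
  -- extend to Icc by continuity
  have hIcc : EqOn f 0 (Icc 0 T) := by
    intro t ht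
    have hne : (nhdsWithin t (Ioo 0 T)).NeBot := by
      rw [← mem_closure_iff_nhdsWithin_neBot, closure_Ioo hT.ne]
      exact ht
    have h1 : Filter.Tendsto f (nhdsWithin t (Ioo 0 T)) (nhds (f t)) :=
      ((hf.continuousOn t ht).mono Ioo_subset_Icc_self).tendsto
    have h2 : Filter.Tendsto f (nhdsWithin t (Ioo 0 T)) (nhds 0) := by
      apply tendsto_const_nhds.congr'
      filter_upwards [self_mem_nhdsWithin] with s hs using (hIoo hs).symm
    exact tendsto_nhds_unique h1 h2
  obtain ⟨s, hs, hsne⟩ := hfne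
  exact hsne (hIcc hs)

open Metric Filter in
lemma aux_local (T : ℝ) (hT : 0 < T) (f : ℝ → ℝ) (hf : AnalyticOn ℝ f (Icc 0 T))
    (hfne : ∃ s ∈ Icc 0 T, f s ≠ 0) (z : ℝ) (hz : z ∈ Icc 0 T) (hz0 : f z = 0) :
    ∃ c > 0, ∃ δ, 0 < δ ∧ δ ≤ 1 ∧ ∃ k : ℕ, 1 ≤ k ∧
      ∀ t ∈ Icc 0 T, dist t z < δ → c * dist t z ^ k ≤ |f t| := by
  obtain ⟨g, hgz, hgeq, hg⟩ := (hf z hz).exists_analyticAt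
  rw [insert_eq_self.mpr hz] at hgeq
  -- g is not eventually zero at z
  have hgne : ¬ ∀ᶠ t in nhds z, g t = 0 := by
    intro hev
    obtain ⟨ε, hε, hball⟩ := Metric.eventually_nhds_iff_ball.mp hev
    -- find an interior point whose nbhd is in ball z ε ∩ Icc
    have hUopen : IsOpen (Metric.ball z ε ∩ Ioo 0 T) := Metric.isOpen_ball.inter isOpen_Ioo
    have hUne : (Metric.ball z ε ∩ Ioo 0 T).Nonempty := by
      have : z ∈ closure (Ioo 0 T) := by rw [closure_Ioo hT.ne]; exact hz
      rw [_root_.mem_closure_iff] at this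
      obtain ⟨y, hy1, hy2⟩ := this _ Metric.isOpen_ball (Metric.mem_ball_self hε)
      exact ⟨y, hy1, hy2⟩
    obtain ⟨w, hw⟩ := hUne
    refine aux_not_ev_zero T hT f hf hfne w hw.2 ?_
    filter_upwards [hUopen.mem_nhds hw] with t ht
    rw [hgeq (Ioo_subset_Icc_self ht.2)]
    exact hball t ht.1
  -- finite order
  have hord : analyticOrderAt g z ≠ ⊤ := by rw [ne_eq, analyticOrderAt_eq_top]; exact hgne
  obtain ⟨n, hn⟩ : ∃ n : ℕ, analyticOrderAt g z = n := by
    cases h : analyticOrderAt g z with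
    | top => exact absurd h hord
    | coe n => exact ⟨n, rfl⟩
  obtain ⟨h, hh, hhz, hhe⟩ := hg.analyticOrderAt_eq_natCast.mp hn
  have hn1 : 1 ≤ n := by
    rcases Nat.eq_zero_or_pos n with h0 | h1
    · exfalso
      apply hhz
      have := hhe.self_of_nhds
      rw [h0, pow_zero, one_smul] at this
      rw [← this, ← hgz, hz0]
    · exact h1
  -- nbhd where |h| ≥ |h z|/2 and factorization holds
  have hcont : ContinuousAt h z := hh.continuousAt
  have habs : ∀ᶠ t in nhds z, |h z| / 2 ≤ |h t| := by
    have : ContinuousAt (fun t => |h t|) z := hcont.abs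
    have h2 : |h z| / 2 < |h z| := by
      have : 0 < |h z| := abs_pos.mpr hhz
      linarith
    exact this.eventually (eventually_ge_nhds h2)
  obtain ⟨δ, hδ, hball⟩ := Metric.eventually_nhds_iff_ball.mp (hhe.and habs)
  have hhz' : 0 < |h z| := abs_pos.mpr hhz
  refine ⟨|h z| / 2, by positivity, min δ 1, lt_min hδ one_pos, min_le_right _ _, n, hn1, ?_⟩
  intro t ht hdist
  have hmem : t ∈ Metric.ball z δ := lt_of_lt_of_le hdist (min_le_left _ _)
  obtain ⟨heq, hge⟩ := hball t hmem
  have hft : f t = (t - z) ^ n * h t := by rw [hgeq ht, heq]; simp [smul_eq_mul]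
  rw [hft, abs_mul, abs_pow, Real.dist_eq]
  have h1 : |t - z| ^ n * (|h z| / 2) ≤ |t - z| ^ n * |h t| :=
    mul_le_mul_of_nonneg_left hge (by positivity)
  linarith

open Metric Filter in
lemma aux_ptwise (T : ℝ) (hT : 0 < T) (f : ℝ → ℝ) (hf : AnalyticOn ℝ f (Icc 0 T))
    (hfne : ∃ s ∈ Icc 0 T, f s ≠ 0) :
    ∃ Z : Finset ℝ, Z.Nonempty ∧ ∃ c > 0, ∃ k : ℕ, 1 ≤ k ∧
      ∀ t ∈ Icc 0 T, c * Metric.infDist t ↑Z ^ k ≤ |f t| ∧ Metric.infDist t ↑Z ≤ T := by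
  classical
  set Z₀ : Set ℝ := {t | t ∈ Icc 0 T ∧ f t = 0} with hZ₀
  have H : ∀ z : ℝ, ∃ c, 0 < c ∧ ∃ δ, 0 < δ ∧ δ ≤ 1 ∧ ∃ k : ℕ, 1 ≤ k ∧
      (z ∈ Z₀ → ∀ t ∈ Icc 0 T, dist t z < δ → c * dist t z ^ k ≤ |f t|) := by
    intro z
    by_cases hz : z ∈ Z₀
    · obtain ⟨c, hc, δ, hδ, hδ1, k, hk, hb⟩ := aux_local T hT f hf hfne z hz.1 hz.2
      exact ⟨c, hc, δ, hδ, hδ1, k, hk, fun _ => hb⟩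
    · exact ⟨1, one_pos, 1, one_pos, le_refl _, 1, le_refl _, fun h => absurd h hz⟩
  choose c hc δ hδ hδ1 k hk hbound using H
  -- each zero is isolated
  have hiso : ∀ z ∈ Z₀, ∀ t ∈ Z₀, t ∈ Metric.ball z (δ z) → t = z := by
    intro z hz t ht htb
    have := hbound z hz t ht.1 htb
    rw [ht.2, abs_zero] at this
    have h1 : dist t z ^ k z > 0 → False := by
      intro hpos
      nlinarith [hc z]
    have h2 : dist t z = 0 := by
      by_contra hne
      exact h1 (pow_pos (lt_of_le_of_ne dist_nonneg (Ne.symm hne)) _)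
    exact dist_eq_zero.mp h2
  -- Z₀ is finite
  have hZclosed : IsClosed Z₀ := by
    have he : Z₀ = Icc 0 T ∩ f ⁻¹' {0} := by ext t; simp [hZ₀]
    rw [he]
    exact hf.continuousOn.preimage_isClosed_of_isClosed isClosed_Icc isClosed_singleton
  have hZcomp : IsCompact Z₀ := isCompact_Icc.of_isClosed_subset hZclosed (fun t ht => ht.1)
  have hZfin : Z₀.Finite := by
    obtain ⟨b, hbsub, hbfin, hbcov⟩ := hZcomp.elim_finite_subcover_image
      (fun z (_ : z ∈ Z₀) => Metric.isOpen_ball (x := z) (ε := δ z))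
      (fun z hz => Set.mem_biUnion hz (Metric.mem_ball_self (hδ z)))
    refine Set.Finite.subset hbfin ?_
    intro z hz
    obtain ⟨w, hw, hzw⟩ := Set.mem_iUnion₂.mp (hbcov hz)
    rwa [hiso w (hbsub hw) z hz hzw]
  -- the compact set away from zeros
  set U : Set ℝ := ⋃ z ∈ hZfin.toFinset, Metric.ball z (δ z) with hU
  have hUopen : IsOpen U := isOpen_biUnion fun _ _ => Metric.isOpen_ball
  set K : Set ℝ := Icc 0 T \ U with hK
  have hKcomp : IsCompact K := isCompact_Icc.diff hUopen
  have hKne0 : ∃ c0, 0 < c0 ∧ ∀ t ∈ K, c0 ≤ |f t| := by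
    rcases K.eq_empty_or_nonempty with he | hne
    · exact ⟨1, one_pos, by rw [he]; simp⟩
    · obtain ⟨t0, ht0, hmin⟩ := hKcomp.exists_isMinOn hne
        ((hf.continuousOn.mono (fun x hx => hx.1)).abs)
      refine ⟨|f t0|, ?_, fun t ht => hmin ht⟩
      rw [abs_pos]
      intro hf0
      have ht0Z : t0 ∈ Z₀ := ⟨ht0.1, hf0⟩
      exact ht0.2 (Set.mem_biUnion (hZfin.mem_toFinset.mpr ht0Z) (Metric.mem_ball_self (hδ t0)))
  obtain ⟨c0, hc0, hKbound⟩ := hKne0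
  -- assemble
  set Zf : Finset ℝ := insert (0:ℝ) hZfin.toFinset with hZf
  have h0Z : (0:ℝ) ∈ Zf := Finset.mem_insert_self _ _
  set kk : ℕ := max 1 (hZfin.toFinset.sup k) with hkk
  have hkk1 : 1 ≤ kk := le_max_left _ _
  set cmin : ℝ := if h : hZfin.toFinset.Nonempty then hZfin.toFinset.inf' h c else 1 with hcmin
  have hcminpos : 0 < cmin := by
    rw [hcmin]; split_ifs with h
    · obtain ⟨z, hz, hzeq⟩ := Finset.exists_mem_eq_inf' h c
      rw [hzeq]; exact hc z
    · exact one_pos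
  set cc : ℝ := min cmin (c0 / T ^ kk) with hcc
  have hccpos : 0 < cc := lt_min hcminpos (by positivity)
  refine ⟨Zf, ⟨0, h0Z⟩, cc, hccpos, kk, hkk1, ?_⟩
  intro t ht
  have hdT : Metric.infDist t ↑Zf ≤ T := by
    refine le_trans (Metric.infDist_le_dist_of_mem (by exact_mod_cast h0Z)) ?_
    rw [Real.dist_eq, sub_zero, abs_of_nonneg ht.1]
    exact ht.2
  refine ⟨?_, hdT⟩
  have hdnn : 0 ≤ Metric.infDist t ↑Zf := Metric.infDist_nonneg
  by_cases htU : t ∈ U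
  · obtain ⟨z, hz, htz⟩ := Set.mem_iUnion₂.mp htU
    have hzZ₀ : z ∈ Z₀ := hZfin.mem_toFinset.mp hz
    have hb := hbound z hzZ₀ t ht htz
    have hd1 : Metric.infDist t ↑Zf ≤ dist t z :=
      Metric.infDist_le_dist_of_mem (by exact_mod_cast Finset.mem_insert_of_mem hz)
    have hd2 : dist t z ≤ 1 := le_of_lt (lt_of_lt_of_le htz (hδ1 z))
    calc cc * Metric.infDist t ↑Zf ^ kk
        ≤ c z * dist t z ^ kk := by
          apply mul_le_mul (le_trans (min_le_left _ _) ?_) (pow_le_pow_left₀ hdnn hd1 kk)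
            (by positivity) (le_of_lt (hc z))
          rw [hcmin]
          rw [dif_pos ⟨z, hz⟩]
          exact Finset.inf'_le c hz
      _ ≤ c z * dist t z ^ k z := by
          apply mul_le_mul_of_nonneg_left _ (le_of_lt (hc z))
          exact pow_le_pow_of_le_one dist_nonneg hd2 (le_trans (Finset.le_sup hz) (le_max_right _ _))
      _ ≤ |f t| := hb
  · have htK : t ∈ K := ⟨ht, htU⟩
    calc cc * Metric.infDist t ↑Zf ^ kk
        ≤ (c0 / T ^ kk) * T ^ kk :=
          mul_le_mul (min_le_right _ _) (pow_le_pow_left₀ hdnn hdT kk) (by positivity)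
            (by positivity)
      _ = c0 := by field_simp
      _ ≤ |f t| := hKbound t htK

open Metric Filter in
lemma aux_key (T : ℝ) (hT : 0 < T) (f : ℝ → ℝ) (hf : AnalyticOn ℝ f (Icc 0 T))
    (hfne : ∃ s ∈ Icc 0 T, f s ≠ 0) :
    ∃ C > 0, ∃ k : ℕ, 1 ≤ k ∧ ∀ E : Set ℝ, MeasurableSet E → E ⊆ Icc 0 T →
      C * (volume E).toReal ^ (k + 1) ≤ ∫ t in E, |f t| := by
  obtain ⟨Z, hZne, c, hc, k, hk1, hpt⟩ := aux_ptwise T hT f hf hfne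
  set N : ℝ := (Z.card : ℝ) with hN
  have hNpos : 0 < N := by
    rw [hN]; exact_mod_cast Finset.card_pos.mpr hZne
  set C : ℝ := c / (2 * (4 * N) ^ k) with hC
  have hCpos : 0 < C := by positivity
  have hint : IntegrableOn (fun t => |f t|) (Icc 0 T) volume :=
    hf.continuousOn.abs.integrableOn_Icc
  refine ⟨C, hCpos, k, hk1, ?_⟩
  intro E hEmeas hEsub
  set m : ℝ := (volume E).toReal with hm
  have hmnn : 0 ≤ m := ENNReal.toReal_nonneg
  have hEfin : volume E < ⊤ :=
    lt_of_le_of_lt (measure_mono hEsub) measure_Icc_lt_top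
  rcases eq_or_lt_of_le hmnn with hm0 | hmpos
  · rw [← hm0, zero_pow (by omega), mul_zero]
    exact setIntegral_nonneg hEmeas fun t _ => abs_nonneg _
  · set r : ℝ := m / (4 * N) with hr
    have hrpos : 0 < r := by positivity
    set ε : ℝ := c * r ^ k with hε
    have hεpos : 0 < ε := by positivity
    set B : Set ℝ := ⋃ z ∈ Z, Metric.closedBall z r with hB
    have hBmeas : MeasurableSet B :=
      Finset.measurableSet_biUnion Z fun z _ => measurableSet_closedBall
    have hμB : volume B ≤ ENNReal.ofReal (m / 2) := by
      calc volume B ≤ ∑ z ∈ Z, volume (Metric.closedBall z r) := measure_biUnion_finset_le _ _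
        _ = ∑ z ∈ Z, ENNReal.ofReal (2 * r) := by
            apply Finset.sum_congr rfl; intro z _; rw [Real.volume_closedBall]
        _ = Z.card • ENNReal.ofReal (2 * r) := by rw [Finset.sum_const]
        _ = ENNReal.ofReal (N * (2 * r)) := by
            rw [nsmul_eq_mul, ← ENNReal.ofReal_natCast Z.card,
              ← ENNReal.ofReal_mul (by positivity)]
        _ = ENNReal.ofReal (m / 2) := by congr 1; rw [hr]; field_simp; ring
    set E' : Set ℝ := E \ B with hE'
    have hE'meas : MeasurableSet E' := hEmeas.diff hBmeas
    have hE'fin : volume E' < ⊤ := lt_of_le_of_lt (measure_mono diff_subset) hEfin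
    -- lower bound for |f| on E'
    have hlow : ∀ t ∈ E', ε ≤ |f t| := by
      intro t ht
      have htIcc := hEsub ht.1
      obtain ⟨hb, -⟩ := hpt t htIcc
      have hdist : r ≤ Metric.infDist t ↑Z := by
        by_contra hlt
        push_neg at hlt
        obtain ⟨z, hz, hdz⟩ := (Z.finite_toSet.isCompact).exists_infDist_eq_dist
          (by exact_mod_cast hZne) t
        exact ht.2 (Set.mem_biUnion hz (by
          rw [Metric.mem_closedBall]
          rw [hdz] at hlt
          exact le_of_lt hlt))
      refine le_trans ?_ hb
      rw [hε]
      exact mul_le_mul_of_nonneg_left (pow_le_pow_left₀ (le_of_lt hrpos) hdist k) (le_of_lt hc)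
    -- measure of E'
    have hμE' : m / 2 ≤ (volume E').toReal := by
      have h1 : volume E ≤ volume E' + volume B :=
        le_trans (measure_mono (by intro t ht; by_cases htB : t ∈ B
                                   · exact Or.inr htB
                                   · exact Or.inl ⟨ht, htB⟩)) (measure_union_le E' B)
      have h2 : (volume E).toReal ≤ (volume E').toReal + (volume B).toReal := by
        rw [← ENNReal.toReal_add hE'fin.ne (lt_of_le_of_lt hμB ENNReal.ofReal_lt_top).ne]
        exact ENNReal.toReal_mono (by
          exact ENNReal.add_ne_top.mpr ⟨hE'fin.ne, (lt_of_le_of_lt hμB ENNReal.ofReal_lt_top).ne⟩) h1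
      have h3 : (volume B).toReal ≤ m / 2 := by
        refine le_trans (ENNReal.toReal_mono ENNReal.ofReal_ne_top hμB) ?_
        rw [ENNReal.toReal_ofReal (by positivity)]
      rw [← hm] at h2
      linarith
    -- integral bound
    have hι : ε * (volume E').toReal ≤ ∫ t in E', |f t| :=
      setIntegral_ge_of_const_le_real hE'meas hE'fin.ne hlow
        ((hint.mono_set (diff_subset.trans hEsub)))
    have hι2 : (∫ t in E', |f t|) ≤ ∫ t in E, |f t| := by
      apply setIntegral_mono_set (hint.mono_set hEsub)
      · filter_upwards with t using abs_nonneg _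
      · exact HasSubset.Subset.eventuallyLE diff_subset
    have hfinal : C * m ^ (k + 1) ≤ ε * (volume E').toReal := by
      have : C * m ^ (k + 1) = ε * (m / 2) := by
        rw [hC, hε, hr, div_pow, pow_succ]
        ring
      rw [this]
      exact mul_le_mul_of_nonneg_left hμE' (le_of_lt hεpos)
    linarith

/-- Lemma 2.3 (first part): if `f` is real analytic on `[0,T]` and not identically zero,
and `Q ⊆ ℝ⁺ × Ω` is measurable, then there are `C > 0`, `β > 0` such that for every
`S ∈ [0,T)` and a.e. `x ∈ Ω`,
`∫_S^T χ_Q(t,x) |f t| dt ≥ C (∫_S^T χ_Q(t,x) dt)^(β+1)`. -/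
theorem stmt_3 (n : ℕ) (Ω : Set (EuclideanSpace ℝ (Fin n)))
    (hΩ : IsBounded Ω) (hΩmeas : MeasurableSet Ω) (hΩne : Ω.Nonempty)
    (T : ℝ) (hT : 0 < T) (f : ℝ → ℝ)
    (hf : AnalyticOn ℝ f (Set.Icc 0 T))
    (hfne : ∃ s ∈ Set.Icc 0 T, f s ≠ 0)
    (Q : Set (ℝ × EuclideanSpace ℝ (Fin n)))
    (hQ : MeasurableSet Q)
    (hQsub : Q ⊆ Set.Ioi 0 ×ˢ Ω) :
    ∃ C > 0, ∃ β > (0 : ℝ), ∀ S ∈ Set.Ico 0 T,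
      ∀ᵐ x ∂(volume.restrict Ω),
        C * (∫ t in Set.Ioc S T, Set.indicator Q (fun _ => (1 : ℝ)) (t, x)) ^ (β + 1)
          ≤ ∫ t in Set.Ioc S T, Set.indicator Q (fun _ => (1 : ℝ)) (t, x) * |f t| := by
  obtain ⟨C, hC, k, hk1, hkey⟩ := aux_key T hT f hf hfne
  refine ⟨C, hC, (k : ℝ), by exact_mod_cast Nat.lt_of_lt_of_le Nat.zero_lt_one hk1, ?_⟩
  intro S hS
  refine ae_of_all _ fun x => ?_
  -- the section of Q at x
  set Ex : Set ℝ := (fun t => (t, x)) ⁻¹' Q with hEx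
  have hExmeas : MeasurableSet Ex := hQ.preimage (measurable_id.prodMk measurable_const)
  set E : Set ℝ := Set.Ioc S T ∩ Ex with hE
  have hEmeas : MeasurableSet E := measurableSet_Ioc.inter hExmeas
  have hEsub : E ⊆ Set.Icc 0 T := fun t ht =>
    ⟨le_of_lt (lt_of_le_of_lt hS.1 ht.1.1), ht.1.2⟩
  -- rewrite the first integral
  have h1 : (∫ t in Set.Ioc S T, Set.indicator Q (fun _ => (1 : ℝ)) (t, x))
      = (volume E).toReal := by
    have : ∀ t : ℝ, Set.indicator Q (fun _ => (1 : ℝ)) (t, x)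
        = Set.indicator Ex (fun _ => (1 : ℝ)) t := by
      intro t
      by_cases h : (t, x) ∈ Q
      · rw [Set.indicator_of_mem h, Set.indicator_of_mem (show t ∈ Ex from h)]
      · rw [Set.indicator_of_notMem h, Set.indicator_of_notMem (show t ∉ Ex from h)]
    simp_rw [this]
    rw [setIntegral_indicator hExmeas, setIntegral_const, smul_eq_mul, mul_one]; rfl
  -- rewrite the second integral
  have h2 : (∫ t in Set.Ioc S T, Set.indicator Q (fun _ => (1 : ℝ)) (t, x) * |f t|)
      = ∫ t in E, |f t| := by
    have : ∀ t : ℝ, Set.indicator Q (fun _ => (1 : ℝ)) (t, x) * |f t|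
        = Set.indicator Ex (fun s => |f s|) t := by
      intro t
      by_cases h : (t, x) ∈ Q
      · rw [Set.indicator_of_mem h, Set.indicator_of_mem (show t ∈ Ex from h), one_mul]
      · rw [Set.indicator_of_notMem h, Set.indicator_of_notMem (show t ∉ Ex from h), zero_mul]
    simp_rw [this]
    rw [setIntegral_indicator hExmeas]
  rw [h1, h2]
  have hrpow : (volume E).toReal ^ ((k : ℝ) + 1) = (volume E).toReal ^ (k + 1) := by
    rw [show ((k : ℝ) + 1) = ((k + 1 : ℕ) : ℝ) by push_cast; ring, Real.rpow_natCast]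
  rw [hrpow]
  exact hkey E hEmeas hEsub
end

section
/- Suppose the triplet (Q,S,T) satisfies the moving observation condition, i.e. ess-inf_{x∈Ω} ∫_S^T χ_Q(t,x) dt =: τ > 0, and let f be a real analytic function on [0,T] not identically zero. Then for every ε with 0 ≤ ε < τ, ess-inf_{x∈Ω} ∫_{S+ε}^T χ_Q(t,x)|f(t)| dt > 0. -/
open Set MeasureTheory Real Bornology

private lemma countable_of_isolated' (Z : Set ℝ)
    (h : ∀ z ∈ Z, ∀ᶠ w in nhdsWithin z {z}ᶜ, w ∉ Z) : Z.Countable := by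
  rw [← Set.countable_coe_iff]
  have : DiscreteTopology ↥Z := by
    rw [discreteTopology_subtype_iff]
    intro x hx
    have h2 := h x hx
    rw [Filter.eventually_iff] at h2
    rw [← Filter.empty_mem_iff_bot, Filter.mem_inf_iff]
    exact ⟨{x | x ∉ Z}, h2, Z, Filter.mem_principal_self Z,
      by ext w; simp only [Set.mem_empty_iff_false, Set.mem_inter_iff, Set.mem_setOf_eq,
          iff_false, not_and]; tauto⟩
  exact TopologicalSpace.separableSpace_iff_countable.mp inferInstance

set_option maxHeartbeats 1600000 in
/-- Lemma 2.3 (second part): if `(Q,S,T)` satisfies the moving observation condition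
with `τ := ess-inf_x ∫_S^T χ_Q(t,x) dt > 0` and `f` is real analytic on `[0,T]`,
not identically zero, then for every `0 ≤ ε < τ`,
`ess-inf_x ∫_{S+ε}^T χ_Q(t,x) |f t| dt > 0`. -/
theorem stmt_4 (n : ℕ) (Ω : Set (EuclideanSpace ℝ (Fin n)))
    (hΩ : IsBounded Ω) (hΩmeas : MeasurableSet Ω) (hΩne : Ω.Nonempty)
    (S T : ℝ) (hS : 0 ≤ S) (hST : S < T) (f : ℝ → ℝ)
    (hf : AnalyticOn ℝ f (Set.Icc 0 T))
    (hfne : ∃ s ∈ Set.Icc 0 T, f s ≠ 0)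
    (Q : Set (ℝ × EuclideanSpace ℝ (Fin n)))
    (hQ : MeasurableSet Q) (hQne : Q.Nonempty)
    (hQsub : Q ⊆ Set.Ioi 0 ×ˢ Ω)
    (τ : ℝ)
    (hτ : τ = essInf (fun x => ∫ t in Set.Ioc S T,
      Set.indicator Q (fun _ => (1 : ℝ)) (t, x)) (volume.restrict Ω))
    (hτpos : 0 < τ) :
    ∀ ε : ℝ, 0 ≤ ε → ε < τ →
      0 < essInf (fun x => ∫ t in Set.Ioc (S + ε) T,
        Set.indicator Q (fun _ => (1 : ℝ)) (t, x) * |f t|) (volume.restrict Ω) := by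
  intro ε hε0 hετ
  have h0T : (0 : ℝ) < T := lt_of_le_of_lt hS hST
  -- the measure is nonzero
  have hμ : volume.restrict Ω ≠ 0 := by
    intro hμ0
    rw [hτ, hμ0, essInf_eq_sSup] at hτpos
    simp only [Measure.coe_zero, Pi.zero_apply, Set.setOf_true] at hτpos
    rw [Real.sSup_univ] at hτpos
    exact lt_irrefl 0 hτpos
  haveI : (ae (volume.restrict Ω)).NeBot := ae_neBot.mpr hμ
  -- the clamped function g, continuous on ℝ, equal to f on `Icc 0 T`
  set g : ℝ → ℝ := fun t => f (max 0 (min t T)) with hgdef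
  have hfc : ContinuousOn f (Set.Icc 0 T) := hf.continuousOn
  have hclamp : ∀ t, max 0 (min t T) ∈ Set.Icc 0 T := fun t =>
    ⟨le_max_left _ _, max_le h0T.le (min_le_right _ _)⟩
  have hgf : ∀ t ∈ Set.Icc 0 T, g t = f t := by
    intro t ht
    simp only [hgdef]
    rw [min_eq_left ht.2, max_eq_right ht.1]
  have hgc : Continuous g :=
    hfc.comp_continuous (continuous_const.max (continuous_id.min continuous_const)) hclamp
  -- g is bounded
  obtain ⟨M, hM⟩ := isCompact_Icc.exists_bound_of_continuousOn hfc
  have hMg : ∀ t, |g t| ≤ M := fun t => by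
    simpa using hM _ (hclamp t)
  -- measurability / integrability of sections of Q
  have hφm : ∀ x : EuclideanSpace ℝ (Fin n),
      Measurable (fun t => Set.indicator Q (fun _ => (1 : ℝ)) (t, x)) := by
    intro x
    exact (measurable_const.indicator hQ).comp (measurable_id.prodMk measurable_const)
  have hφ01 : ∀ x, ∀ t : ℝ, (0 : ℝ) ≤ Set.indicator Q (fun _ => (1 : ℝ)) (t, x) ∧
      Set.indicator Q (fun _ => (1 : ℝ)) (t, x) ≤ 1 := by
    intro x t
    by_cases h : (t, x) ∈ Q <;> simp [Set.indicator_apply, h]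
  have hφint : ∀ x, ∀ a b : ℝ,
      IntegrableOn (fun t => Set.indicator Q (fun _ => (1 : ℝ)) (t, x)) (Set.Ioc a b) volume := by
    intro x a b
    refine Integrable.mono' (g := fun _ => (1 : ℝ))
      (integrableOn_const measure_Ioc_lt_top.ne)
      (hφm x).aestronglyMeasurable ?_
    filter_upwards with t
    rw [Real.norm_eq_abs, abs_of_nonneg (hφ01 x t).1]
    exact (hφ01 x t).2
  -- a.e. lower bound τ ≤ ∫_S^T χ_Q
  have hbdd : Filter.IsBoundedUnder (· ≥ ·) (ae (volume.restrict Ω))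
      (fun x => ∫ t in Set.Ioc S T, Set.indicator Q (fun _ => (1 : ℝ)) (t, x)) := by
    refine Filter.isBoundedUnder_of ⟨0, fun x => ?_⟩
    exact integral_nonneg (fun t => (hφ01 x t).1)
  have hae : ∀ᵐ x ∂(volume.restrict Ω),
      τ ≤ ∫ t in Set.Ioc S T, Set.indicator Q (fun _ => (1 : ℝ)) (t, x) := by
    rw [hτ]; exact ae_essInf_le hbdd
  -- upper bound: each integral is at most T - S
  have hub : ∀ x, (∫ t in Set.Ioc S T, Set.indicator Q (fun _ => (1 : ℝ)) (t, x)) ≤ T - S := by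
    intro x
    calc (∫ t in Set.Ioc S T, Set.indicator Q (fun _ => (1 : ℝ)) (t, x))
        ≤ ∫ _t in Set.Ioc S T, (1 : ℝ) :=
          setIntegral_mono (hφint x S T) (integrableOn_const measure_Ioc_lt_top.ne)
            (fun t => (hφ01 x t).2)
      _ = T - S := by
          rw [setIntegral_const, Real.volume_real_Ioc_of_le (by linarith), smul_eq_mul, mul_one]
  have hτTS : τ ≤ T - S := by
    obtain ⟨x, hx⟩ := hae.exists
    exact hx.trans (hub x)
  have hSεT : S + ε < T := by linarith
  -- the zero set of f inside (0,T) is countable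
  have hIoo : AnalyticOnNhd ℝ f (Set.Ioo 0 T) := by
    intro z hz
    have h1 : Set.Icc 0 T ∈ nhdsWithin z Set.univ := by
      rw [nhdsWithin_univ]
      exact Icc_mem_nhds hz.1 hz.2
    exact analyticWithinAt_univ.mp ((hf z (Set.Ioo_subset_Icc_self hz)).mono_of_mem_nhdsWithin h1)
  have hne' : ∃ s ∈ Set.Ioo 0 T, f s ≠ 0 := by
    obtain ⟨s, hs, hfs⟩ := hfne
    have hcont : ContinuousWithinAt f (Set.Icc 0 T) s := hfc s hs
    have hev : {w | f w ≠ 0} ∈ nhdsWithin s (Set.Icc 0 T) := by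
      have := hcont.preimage_mem_nhdsWithin (compl_singleton_mem_nhds hfs)
      simpa [Set.preimage, Set.compl_eq_univ_diff] using this
    have hsc : s ∈ closure (Set.Ioo 0 T) := by
      rwa [closure_Ioo (ne_of_lt h0T)]
    haveI : (nhdsWithin s (Set.Ioo 0 T)).NeBot := mem_closure_iff_nhdsWithin_neBot.1 hsc
    have hle : nhdsWithin s (Set.Ioo 0 T) ≤ nhdsWithin s (Set.Icc 0 T) :=
      nhdsWithin_mono _ Set.Ioo_subset_Icc_self
    have h1 : ∀ᶠ w in nhdsWithin s (Set.Ioo 0 T), f w ≠ 0 := hle hev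
    have h2 : ∀ᶠ w in nhdsWithin s (Set.Ioo 0 T), w ∈ Set.Ioo 0 T := self_mem_nhdsWithin
    obtain ⟨w, hw1, hw2⟩ := (h1.and h2).exists
    exact ⟨w, hw2, hw1⟩
  have hnz : ¬ Set.EqOn f 0 (Set.Ioo 0 T) := by
    obtain ⟨s, hs, hfs⟩ := hne'
    intro h
    exact hfs (h hs)
  set Z : Set ℝ := {t | f t = 0} ∩ Set.Ioo 0 T with hZdef
  have hZc : Z.Countable := by
    apply countable_of_isolated'
    rintro z ⟨hz0, hzI⟩
    rcases (hIoo z hzI).eventually_eq_zero_or_eventually_ne_zero with h | h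
    · exfalso
      apply hnz
      apply hIoo.eqOn_zero_of_preconnected_of_frequently_eq_zero isPreconnected_Ioo hzI
      exact (h.filter_mono nhdsWithin_le_nhds).frequently
    · filter_upwards [h] with w hw
      exact fun hwZ => hw hwZ.1
  have hZ0 : volume ({t | g t = 0} ∩ Set.Ioc (S + ε) T) = 0 := by
    refine measure_mono_null ?_ (measure_union_null (hZc.measure_zero volume) (measure_singleton T))
    rintro t ⟨hgt, htI⟩
    have htIcc : t ∈ Set.Icc 0 T := ⟨by linarith [htI.1], htI.2⟩
    have hft : f t = 0 := by rw [← hgf t htIcc]; exact hgt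
    by_cases hT : t = T
    · exact Or.inr (by simp [hT])
    · exact Or.inl ⟨hft, ⟨by linarith [htI.1], lt_of_le_of_ne htI.2 hT⟩⟩
  -- choose δ = 1/(k+1) with small sublevel set
  set A : ℕ → Set ℝ := fun k => {t | |g t| < 1 / ((k : ℝ) + 1)} ∩ Set.Ioc (S + ε) T with hAdef
  have hAm : ∀ k, MeasurableSet (A k) := by
    intro k
    exact ((isOpen_lt hgc.abs continuous_const).measurableSet).inter measurableSet_Ioc
  have hAanti : Antitone A := by
    intro j k hjk
    apply Set.inter_subset_inter_left
    intro t ht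
    simp only [Set.mem_setOf_eq] at ht ⊢
    refine lt_of_lt_of_le ht ?_
    apply one_div_le_one_div_of_le (by positivity)
    exact add_le_add_left (Nat.cast_le.mpr hjk) 1
  have hAiInter : (⋂ k, A k) ⊆ {t | g t = 0} ∩ Set.Ioc (S + ε) T := by
    intro t ht
    have h1 : ∀ k : ℕ, |g t| < 1 / ((k : ℝ) + 1) := fun k => (Set.mem_iInter.1 ht k).1
    have h2 : t ∈ Set.Ioc (S + ε) T := (Set.mem_iInter.1 ht 0).2
    refine ⟨?_, h2⟩
    have : |g t| ≤ 0 := by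
      by_contra hc
      push_neg at hc
      obtain ⟨k, hk⟩ := exists_nat_one_div_lt hc
      exact absurd (h1 k) (not_lt.mpr hk.le)
    exact abs_nonneg (g t) |>.antisymm' this |> abs_eq_zero.mp
  have htend : Filter.Tendsto (fun k => volume (A k)) Filter.atTop (nhds 0) := by
    have := tendsto_measure_iInter_atTop (μ := volume)
      (fun k => (hAm k).nullMeasurableSet) hAanti
      ⟨0, (lt_of_le_of_lt (measure_mono (Set.inter_subset_right)) measure_Ioc_lt_top).ne⟩
    rw [show volume (⋂ k, A k) = 0 from measure_mono_null hAiInter hZ0] at this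
    exact this
  have hτε2 : (0 : ℝ) < (τ - ε) / 2 := by linarith
  obtain ⟨k, hk⟩ := (htend.eventually_lt_const
    (show (0 : ENNReal) < ENNReal.ofReal ((τ - ε) / 2) by
      exact ENNReal.ofReal_pos.mpr hτε2)).exists
  set δ : ℝ := 1 / ((k : ℝ) + 1) with hδdef
  have hδpos : 0 < δ := by positivity
  set B : Set ℝ := {t | |g t| < δ} with hBdef
  have hBm : MeasurableSet B := (isOpen_lt hgc.abs continuous_const).measurableSet
  -- final bound
  have hcpos : 0 < δ * ((τ - ε) / 2) := by positivity
  have hFub : ∀ x : EuclideanSpace ℝ (Fin n), (∫ t in Set.Ioc (S + ε) T,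
      Set.indicator Q (fun _ => (1 : ℝ)) (t, x) * |f t|) ≤
      (max M 0) * (volume (Set.Ioc (S + ε) T)).toReal := by
    intro x
    refine (le_abs_self _).trans ?_
    rw [← Real.norm_eq_abs]
    refine norm_setIntegral_le_of_norm_le_const_ae' measure_Ioc_lt_top ?_
    filter_upwards with t ht
    have htg : |f t| = |g t| := by rw [hgf t ⟨by linarith [ht.1], ht.2⟩]
    rw [Real.norm_eq_abs, abs_mul, abs_of_nonneg (hφ01 x t).1, abs_abs]
    calc Set.indicator Q (fun _ => (1 : ℝ)) (t, x) * |f t|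
        ≤ 1 * |f t| := mul_le_mul_of_nonneg_right (hφ01 x t).2 (abs_nonneg _)
      _ = |g t| := by rw [one_mul, htg]
      _ ≤ max M 0 := (hMg t).trans (le_max_left _ _)
  have hco : Filter.IsCoboundedUnder (· ≥ ·) (ae (volume.restrict Ω))
      (fun x => ∫ t in Set.Ioc (S + ε) T,
        Set.indicator Q (fun _ => (1 : ℝ)) (t, x) * |f t|) :=
    Filter.isCoboundedUnder_ge_of_le _ hFub
  refine lt_of_lt_of_le hcpos (Filter.le_liminf_of_le hco ?_)
  filter_upwards [hae] with x hx
  set φ : ℝ → ℝ := fun t => Set.indicator Q (fun _ => (1 : ℝ)) (t, x) with hφdef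
  -- step 1: integral over Ioc S (S+ε) is at most ε
  have step1 : (∫ t in Set.Ioc S (S + ε), φ t) ≤ ε := by
    calc (∫ t in Set.Ioc S (S + ε), φ t)
        ≤ ∫ _t in Set.Ioc S (S + ε), (1 : ℝ) :=
          setIntegral_mono (hφint x _ _) (integrableOn_const measure_Ioc_lt_top.ne)
            (fun t => (hφ01 x t).2)
      _ = ε := by
          rw [setIntegral_const, Real.volume_real_Ioc_of_le (by linarith), smul_eq_mul, mul_one,
            add_sub_cancel_left]
  -- step 2: integral over Ioc (S+ε) T is at least τ - ε
  have hsplit : (∫ t in Set.Ioc S T, φ t)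
      = (∫ t in Set.Ioc S (S + ε), φ t) + ∫ t in Set.Ioc (S + ε) T, φ t := by
    rw [← setIntegral_union (Set.Ioc_disjoint_Ioc_of_le le_rfl) measurableSet_Ioc (hφint x _ _)
      (hφint x _ _), Set.Ioc_union_Ioc_eq_Ioc (by linarith) hSεT.le]
  have step2 : τ - ε ≤ ∫ t in Set.Ioc (S + ε) T, φ t := by
    have := hx
    rw [hsplit] at this
    linarith
  -- step 3: the sublevel indicator has small integral
  have step3 : (∫ t in Set.Ioc (S + ε) T, B.indicator (fun _ => (1 : ℝ)) t) ≤ (τ - ε) / 2 := by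
    rw [setIntegral_indicator hBm, setIntegral_const, smul_eq_mul, mul_one]
    have hABk : Set.Ioc (S + ε) T ∩ B = A k := by
      rw [hAdef, hBdef, Set.inter_comm]
    rw [hABk]
    have := (ENNReal.lt_ofReal_iff_toReal_lt (ne_of_lt
      (lt_of_le_of_lt (measure_mono (Set.inter_subset_right)) measure_Ioc_lt_top))).mp hk
    exact this.le
  -- step 4: pointwise inequality
  have step4 : ∀ t, δ * (φ t - B.indicator (fun _ => (1 : ℝ)) t) ≤ φ t * |g t| := by
    intro t
    by_cases hb : t ∈ B
    · rw [Set.indicator_of_mem hb]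
      have h1 : φ t - 1 ≤ 0 := by linarith [(hφ01 x t).2]
      have h2 : 0 ≤ φ t * |g t| := mul_nonneg (hφ01 x t).1 (abs_nonneg _)
      nlinarith
    · rw [Set.indicator_of_notMem hb, sub_zero]
      have h1 : δ ≤ |g t| := not_lt.mp hb
      calc δ * φ t ≤ |g t| * φ t := mul_le_mul_of_nonneg_right h1 (hφ01 x t).1
        _ = φ t * |g t| := mul_comm _ _
  -- integrability facts on Ioc (S+ε) T
  have hint1 : IntegrableOn (fun t => φ t * |g t|) (Set.Ioc (S + ε) T) volume := by
    refine Integrable.mono' (g := fun _ => max M 0)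
      (integrableOn_const measure_Ioc_lt_top.ne)
      (((hφm x).mul hgc.abs.measurable).aestronglyMeasurable) ?_
    filter_upwards with t
    rw [Real.norm_eq_abs, abs_mul, abs_of_nonneg (hφ01 x t).1, abs_abs]
    calc φ t * |g t| ≤ 1 * |g t| := mul_le_mul_of_nonneg_right (hφ01 x t).2 (abs_nonneg _)
      _ = |g t| := one_mul _
      _ ≤ max M 0 := le_trans (hMg t) (le_max_left _ _)
  have hint2 : IntegrableOn (fun t => B.indicator (fun _ => (1 : ℝ)) t) (Set.Ioc (S + ε) T)
      volume := by
    refine Integrable.mono' (g := fun _ => (1 : ℝ))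
      (integrableOn_const measure_Ioc_lt_top.ne)
      ((measurable_const.indicator hBm).aestronglyMeasurable) ?_
    filter_upwards with t
    by_cases hb : t ∈ B <;> simp [Set.indicator_apply, hb]
  have hint3 : IntegrableOn (fun t => δ * (φ t - B.indicator (fun _ => (1 : ℝ)) t))
      (Set.Ioc (S + ε) T) volume := (((hφint x _ _).sub hint2).const_mul δ)
  -- conclusion
  have heqfg : (∫ t in Set.Ioc (S + ε) T, φ t * |f t|)
      = ∫ t in Set.Ioc (S + ε) T, φ t * |g t| := by
    apply setIntegral_congr_fun measurableSet_Ioc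
    intro t ht
    have hgt := hgf t ⟨by linarith [ht.1], ht.2⟩
    dsimp only
    rw [hgt]
  show δ * ((τ - ε) / 2) ≤ ∫ t in Set.Ioc (S + ε) T, φ t * |f t|
  rw [heqfg]
  calc δ * ((τ - ε) / 2) ≤ δ * ((∫ t in Set.Ioc (S + ε) T, φ t)
        - ∫ t in Set.Ioc (S + ε) T, B.indicator (fun _ => (1 : ℝ)) t) := by
        apply mul_le_mul_of_nonneg_left _ hδpos.le
        linarith
    _ = ∫ t in Set.Ioc (S + ε) T, δ * (φ t - B.indicator (fun _ => (1 : ℝ)) t) := by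
        rw [MeasureTheory.integral_const_mul, integral_sub (hφint x _ _) hint2]
    _ ≤ ∫ t in Set.Ioc (S + ε) T, φ t * |g t| :=
        setIntegral_mono hint3 hint1 (fun t => step4 t)
end
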